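/- There exist a convex triangular grid G and a concave cocirculation h in G such that h is not integer-valued and h is the unique concave cocirculation in G agreeing with h on the set F = {e ∈ E(G) : h(e) ∈ ℤ} (i.e., C(G, h|_F) = {h}). In particular, there is no integer concave cocirculation h' in G with h'(e)=h(e) for every edge e on which h takes an integer value. -/

import Mathlib

open scoped BigOperators

attribute [local instance] Classical.propDecidable

noncomputable section

/-- Points of the plane. -/
abbrev Pt : Type := ℝ × ℝ

/-- Directed edges: ordered pairs of points. -/
abbrev Ed : Type := Pt × Pt

/-- The three generating vectors ξ₁ = (1,0), ξ₂ = (−1/2, √3/2), ξ₃ = (−1/2, −√3/2). -/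
noncomputable def xiv : Fin 3 → Pt
  | 0 => ((1 : ℝ), (0 : ℝ))
  | 1 => (-(1 / 2 : ℝ), Real.sqrt 3 / 2)
  | 2 => (-(1 / 2 : ℝ), -(Real.sqrt 3 / 2))

/-- A little (lattice) triangle of the triangular grid, given by its base point and
its orientation (`up = true` for an upward triangle). -/
structure GridTriangle : Type where
  base : Pt
  up : Bool

noncomputable def GridTriangle.v0 (T : GridTriangle) : Pt := T.base
noncomputable def GridTriangle.v1 (T : GridTriangle) : Pt := T.base + xiv 0
noncomputable def GridTriangle.v2 (T : GridTriangle) : Pt :=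
  if T.up then T.base + xiv 0 + xiv 1 else T.base + xiv 0 + xiv 2

/-- The three directed edges of the 3-circuit surrounding a little triangle;
each has direction ξ₁, ξ₂ or ξ₃. -/
noncomputable def GridTriangle.e0 (T : GridTriangle) : Ed := (T.v0, T.v1)
noncomputable def GridTriangle.e1 (T : GridTriangle) : Ed := (T.v1, T.v2)
noncomputable def GridTriangle.e2 (T : GridTriangle) : Ed := (T.v2, T.v0)

noncomputable def GridTriangle.edgeFinset (T : GridTriangle) : Finset Ed := {T.e0, T.e1, T.e2}

/-- The closed region spanned by a little triangle. -/
noncomputable def GridTriangle.region (T : GridTriangle) : Set Pt :=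
  convexHull ℝ {T.v0, T.v1, T.v2}

/-- Vectors of the lattice generated by ξ₁ and ξ₂. -/
def IsLatticeVec (p : Pt) : Prop := ∃ m n : ℤ, p = (m : ℝ) • xiv 0 + (n : ℝ) • xiv 1

/-- A convex triangular grid: a finite nonempty set of little triangles of a common
translate of the triangular lattice whose union is a convex polygon.  (Its vertices,
edges, bounded faces and boundary are then those of the planar digraph formed by the
edges of the little triangles.) -/
structure ConvexGrid : Type where
  tris : Finset GridTriangle
  nonempty : tris.Nonempty
  aligned : ∀ T ∈ tris, ∀ T' ∈ tris, IsLatticeVec (T.base - T'.base)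
  convex : Convex ℝ (⋃ T ∈ tris, GridTriangle.region T)

/-- The region R(G) spanned by the grid. -/
noncomputable def ConvexGrid.region (G : ConvexGrid) : Set Pt :=
  ⋃ T ∈ G.tris, GridTriangle.region T

/-- The (directed) edge set E(G) of the grid. -/
noncomputable def ConvexGrid.edges (G : ConvexGrid) : Finset Ed :=
  G.tris.biUnion GridTriangle.edgeFinset

/-- The boundary edges B(G): edges lying in exactly one little triangle. -/
noncomputable def ConvexGrid.boundary (G : ConvexGrid) : Finset Ed :=
  G.edges.filter fun e => (G.tris.filter fun T => e ∈ T.edgeFinset).card = 1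

/-- A cocirculation: `h(e)+h(e')+h(e'')=0` around each little triangle. -/
def IsCocirculation (G : ConvexGrid) (h : Ed → ℝ) : Prop :=
  ∀ T ∈ G.tris, h T.e0 + h T.e1 + h T.e2 = 0

/-- `g` coincides with an affine function on `S`. -/
def AffineOn (g : Pt → ℝ) (S : Set Pt) : Prop :=
  ∃ φ : Pt →ᵃ[ℝ] ℝ, ∀ x ∈ S, g x = φ x

/-- A concave cocirculation: a cocirculation induced by a concave function on R(G)
which is affinely linear within each little triangle. -/
def IsConcaveCocirculation (G : ConvexGrid) (h : Ed → ℝ) : Prop :=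
  IsCocirculation G h ∧
  ∃ g : Pt → ℝ, ConcaveOn ℝ G.region g ∧ (∀ T ∈ G.tris, AffineOn g T.region) ∧
    ∀ e ∈ G.edges, h e = g e.2 - g e.1

/-- The polyhedron C(G,h₀) of concave cocirculations agreeing with h₀ on F. -/
def CC (G : ConvexGrid) (F : Set Ed) (h₀ : Ed → ℝ) : Set (Ed → ℝ) :=
  {h | IsConcaveCocirculation G h ∧ ∀ e ∈ F, h e = h₀ e}

/-- `h` is a vertex (extreme point) of the set `C` of cocirculations, regarded as a
subset of ℝ^{E(G)} (only the coordinates on the edges of `G` matter). -/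
def IsVertexOf (G : ConvexGrid) (C : Set (Ed → ℝ)) (h : Ed → ℝ) : Prop :=
  h ∈ C ∧ ∀ h₁ ∈ C, ∀ h₂ ∈ C,
    (∀ e ∈ G.edges, h e = (h₁ e + h₂ e) / 2) → ∀ e ∈ G.edges, h₁ e = h₂ e


noncomputable def pt (i j : ℝ) : Pt := (i - j / 2, j * Real.sqrt 3 / 2)
lemma s3 : Real.sqrt 3 * Real.sqrt 3 = 3 := Real.mul_self_sqrt (by norm_num)
lemma s3ne : Real.sqrt 3 ≠ 0 := ne_of_gt (Real.sqrt_pos.2 (by norm_num))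

lemma pt_add (a b c d : ℝ) : pt a b + pt c d = pt (a+c) (b+d) := by
  simp only [pt, Prod.mk_add_mk, Prod.mk.injEq]; constructor <;> ring
lemma pt_sub (a b c d : ℝ) : pt a b - pt c d = pt (a-c) (b-d) := by
  simp only [pt, Prod.mk_sub_mk, Prod.mk.injEq]; constructor <;> ring
lemma xiv0 : xiv 0 = pt 1 0 := by simp [xiv, pt]
lemma xiv1 : xiv 1 = pt 0 1 := by
  simp only [xiv, pt, Prod.mk.injEq]; constructor <;> ring
lemma xiv2 : xiv 2 = pt (-1) (-1) := by
  simp only [xiv, pt, Prod.mk.injEq]; constructor <;> ring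

noncomputable def up (i j : ℝ) : GridTriangle := ⟨pt i j, true⟩
noncomputable def dn (i j : ℝ) : GridTriangle := ⟨pt i j, false⟩

lemma up_v0 (i j : ℝ) : (up i j).v0 = pt i j := rfl
lemma up_v1 (i j : ℝ) : (up i j).v1 = pt (i+1) j := by
  simp only [GridTriangle.v1, up, xiv0, pt_add]; norm_num
lemma up_v2 (i j : ℝ) : (up i j).v2 = pt (i+1) (j+1) := by
  simp only [GridTriangle.v2, up, if_pos, xiv0, xiv1, pt_add]; norm_num
lemma dn_v0 (i j : ℝ) : (dn i j).v0 = pt i j := rfl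
lemma dn_v1 (i j : ℝ) : (dn i j).v1 = pt (i+1) j := by
  simp only [GridTriangle.v1, dn, xiv0, pt_add]; norm_num
lemma dn_v2 (i j : ℝ) : (dn i j).v2 = pt i (j-1) := by
  simp only [GridTriangle.v2, dn, Bool.false_eq_true, if_false, xiv0, xiv2, pt_add]
  rw [show i + 1 + -1 = i from by ring, show j + 0 + -1 = j - 1 from by ring]

lemma up_region (i j : ℝ) :
    (up i j).region = convexHull ℝ {pt i j, pt (i+1) j, pt (i+1) (j+1)} := by
  rw [GridTriangle.region, up_v0, up_v1, up_v2]
lemma dn_region (i j : ℝ) :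
    (dn i j).region = convexHull ℝ {pt i j, pt (i+1) j, pt i (j-1)} := by
  rw [GridTriangle.region, dn_v0, dn_v1, dn_v2]

/- lattice coordinates of a plane point -/
noncomputable def av (z : Pt) : ℝ := z.1 + z.2 / Real.sqrt 3
noncomputable def bv (z : Pt) : ℝ := 2 * z.2 / Real.sqrt 3

lemma av_pt (i j : ℝ) : av (pt i j) = i := by
  have h : j * Real.sqrt 3 / 2 / Real.sqrt 3 = j / 2 := by
    field_simp
  simp only [av, pt, h]; ring
lemma bv_pt (i j : ℝ) : bv (pt i j) = j := by
  simp only [bv, pt]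
  rw [show 2 * (j * Real.sqrt 3 / 2) / Real.sqrt 3 = j * (Real.sqrt 3 / Real.sqrt 3) from by ring,
    div_self s3ne, mul_one]
lemma pt_av_bv (z : Pt) : z = pt (av z) (bv z) := by
  simp only [av, bv, pt]
  rw [Prod.ext_iff]
  have h : 2 * z.2 / Real.sqrt 3 * Real.sqrt 3 = 2 * z.2 := by
    rw [div_mul_eq_mul_div, mul_div_assoc, div_self s3ne, mul_one]
  constructor
  · simp only []
    rw [show z.1 + z.2 / Real.sqrt 3 - 2 * z.2 / Real.sqrt 3 / 2
        = z.1 + z.2 / Real.sqrt 3 - z.2 / Real.sqrt 3 by ring]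
    ring
  · simp only []
    rw [show 2 * z.2 / Real.sqrt 3 * Real.sqrt 3 / 2 = (2 * z.2 / Real.sqrt 3 * Real.sqrt 3) / 2 by ring, h]
    ring

noncomputable def H : Set Pt :=
  {z | 0 ≤ av z ∧ av z ≤ 3 ∧ 0 ≤ bv z ∧ bv z ≤ 2 ∧ -1 ≤ av z - bv z ∧ av z - bv z ≤ 2}

lemma av_combo (a b : ℝ) (x y : Pt) : av (a • x + b • y) = a * av x + b * av y := by
  simp only [av, Prod.smul_fst, Prod.smul_snd, Prod.fst_add, Prod.snd_add, smul_eq_mul]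
  ring
lemma bv_combo (a b : ℝ) (x y : Pt) : bv (a • x + b • y) = a * bv x + b * bv y := by
  simp only [bv, Prod.smul_fst, Prod.smul_snd, Prod.fst_add, Prod.snd_add, smul_eq_mul]
  ring

lemma H_convex : Convex ℝ H := by
  intro x hx y hy a b ha hb hab
  obtain ⟨h1, h2, h3, h4, h5, h6⟩ := hx
  obtain ⟨k1, k2, k3, k4, k5, k6⟩ := hy
  refine ⟨?_, ?_, ?_, ?_, ?_, ?_⟩ <;>
    simp only [av_combo, bv_combo] <;> nlinarith [mul_le_mul_of_nonneg_left h2 ha,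
      mul_le_mul_of_nonneg_left k2 hb, mul_le_mul_of_nonneg_left h4 ha,
      mul_le_mul_of_nonneg_left k4 hb, mul_le_mul_of_nonneg_left h6 ha,
      mul_le_mul_of_nonneg_left k6 hb, mul_le_mul_of_nonneg_left h1 ha,
      mul_le_mul_of_nonneg_left k1 hb, mul_le_mul_of_nonneg_left h3 ha,
      mul_le_mul_of_nonneg_left k3 hb, mul_le_mul_of_nonneg_left h5 ha,
      mul_le_mul_of_nonneg_left k5 hb]

lemma pt_mem_H {i j : ℝ} (h1 : 0 ≤ i) (h2 : i ≤ 3) (h3 : 0 ≤ j) (h4 : j ≤ 2)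
    (h5 : -1 ≤ i - j) (h6 : i - j ≤ 2) : pt i j ∈ H := by
  refine ⟨?_, ?_, ?_, ?_, ?_, ?_⟩ <;> simp only [av_pt, bv_pt] <;> linarith

lemma combo_pt {α β a1 b1 a2 b2 a3 b3 l1 l2 l3 : ℝ}
    (ha : l1*a1 + l2*a2 + l3*a3 = α) (hb : l1*b1 + l2*b2 + l3*b3 = β) :
    l1 • pt a1 b1 + l2 • pt a2 b2 + l3 • pt a3 b3 = pt α β := by
  simp only [pt, Prod.smul_mk, smul_eq_mul, Prod.mk_add_mk, Prod.mk.injEq]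
  constructor
  · linear_combination ha - hb / 2
  · linear_combination (Real.sqrt 3 / 2) * hb

lemma mem_hull3 {x a b c : Pt} {l1 l2 l3 : ℝ} (h1 : 0 ≤ l1) (h2 : 0 ≤ l2) (h3 : 0 ≤ l3)
    (hs : l1 + l2 + l3 = 1) (hx : x = l1 • a + l2 • b + l3 • c) :
    x ∈ convexHull ℝ ({a, b, c} : Set Pt) := by
  have hA : a ∈ convexHull ℝ ({a, b, c} : Set Pt) := subset_convexHull ℝ _ (by simp)
  have hB : b ∈ convexHull ℝ ({a, b, c} : Set Pt) := subset_convexHull ℝ _ (by simp)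
  have hC : c ∈ convexHull ℝ ({a, b, c} : Set Pt) := subset_convexHull ℝ _ (by simp)
  have hcv := convex_convexHull ℝ ({a, b, c} : Set Pt)
  rcases eq_or_lt_of_le (add_nonneg h1 h2) with hz | hpos
  · have hl1 : l1 = 0 := by linarith
    have hl2 : l2 = 0 := by linarith
    have hl3 : l3 = 1 := by linarith
    rw [hx, hl1, hl2, hl3, zero_smul, zero_smul, one_smul, zero_add, zero_add]
    exact hC
  · set m := l1 + l2 with hm
    have hy : (l1/m) • a + (l2/m) • b ∈ convexHull ℝ ({a, b, c} : Set Pt) :=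
      hcv hA hB (div_nonneg h1 (le_of_lt hpos)) (div_nonneg h2 (le_of_lt hpos))
        (by field_simp; exact hm.symm)
    have hfin := hcv hy hC (le_of_lt hpos) h3 (by linarith)
    have : m • ((l1/m) • a + (l2/m) • b) + l3 • c = l1 • a + l2 • b + l3 • c := by
      rw [smul_add, smul_smul, smul_smul]
      rw [mul_div_cancel₀ _ (ne_of_gt hpos), mul_div_cancel₀ _ (ne_of_gt hpos)]
    rw [hx, ← this]
    exact hfin

noncomputable def Gtris : Finset GridTriangle :=
  {up 0 0, up 0 1, dn 0 1, up 1 0, up 1 1, dn 1 1, dn 1 2, up 2 1, dn 2 1, dn 2 2}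

lemma unionH : (⋃ T ∈ Gtris, T.region) = H := by
  apply Set.Subset.antisymm
  · apply Set.iUnion₂_subset
    intro T hT
    simp only [Gtris, Finset.mem_insert, Finset.mem_singleton] at hT
    rcases hT with rfl|rfl|rfl|rfl|rfl|rfl|rfl|rfl|rfl|rfl <;>
      first
      | (rw [up_region]; apply convexHull_min _ H_convex;
         simp only [Set.insert_subset_iff, Set.singleton_subset_iff];
         refine ⟨pt_mem_H ?_ ?_ ?_ ?_ ?_ ?_, pt_mem_H ?_ ?_ ?_ ?_ ?_ ?_,
           pt_mem_H ?_ ?_ ?_ ?_ ?_ ?_⟩ <;> norm_num)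
      | (rw [dn_region]; apply convexHull_min _ H_convex;
         simp only [Set.insert_subset_iff, Set.singleton_subset_iff];
         refine ⟨pt_mem_H ?_ ?_ ?_ ?_ ?_ ?_, pt_mem_H ?_ ?_ ?_ ?_ ?_ ?_,
           pt_mem_H ?_ ?_ ?_ ?_ ?_ ?_⟩ <;> norm_num)
  · intro z hz
    obtain ⟨h1, h2, h3, h4, h5, h6⟩ := hz
    set α := av z with hα
    set β := bv z with hβ
    have hz' : z = pt α β := pt_av_bv z
    have mem : ∀ T : GridTriangle, T ∈ Gtris → z ∈ T.region → z ∈ ⋃ T ∈ Gtris, T.region :=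
      fun T hT hx => Set.mem_biUnion hT hx
    rcases le_total β 1 with hrow | hrow
    · rcases le_total α β with hc | hc
      · refine mem (dn 0 1) (by simp [Gtris]) ?_
        rw [dn_region, hz']
        exact mem_hull3 (by linarith) (by linarith) (by linarith) (by ring)
          (combo_pt (l1 := β - α) (l2 := α) (l3 := 1 - β) (by ring) (by ring)).symm
      · rcases le_total α (β+1) with hc2 | hc2
        · rcases le_total α 1 with hs | hs
          · refine mem (up 0 0) (by simp [Gtris]) ?_
            rw [up_region, hz']
            exact mem_hull3 (a := pt 0 0) (by linarith) (by linarith) (by linarith)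
              (by ring)
              (combo_pt (l1 := 1 - α) (l2 := α - β) (l3 := β) (by ring) (by ring)).symm
          · refine mem (dn 1 1) (by simp [Gtris]) ?_
            rw [dn_region, hz']
            exact mem_hull3 (by linarith) (by linarith) (by linarith) (by ring)
              (combo_pt (l1 := β - α + 1) (l2 := α - 1) (l3 := 1 - β) (by ring) (by ring)).symm
        · rcases le_total α 2 with hs | hs
          · refine mem (up 1 0) (by simp [Gtris]) ?_
            rw [up_region, hz']
            exact mem_hull3 (by linarith) (by linarith) (by linarith) (by ring)
              (combo_pt (l1 := 2 - α) (l2 := α - β - 1) (l3 := β) (by ring) (by ring)).symm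
          · refine mem (dn 2 1) (by simp [Gtris]) ?_
            rw [dn_region, hz']
            exact mem_hull3 (by linarith) (by linarith) (by linarith) (by ring)
              (combo_pt (l1 := β - α + 2) (l2 := α - 2) (l3 := 1 - β) (by ring) (by ring)).symm
    · rcases le_total α β with hc | hc
      · rcases le_total α 1 with hs | hs
        · refine mem (up 0 1) (by simp [Gtris]) ?_
          rw [up_region, hz']
          exact mem_hull3 (by linarith) (by linarith) (by linarith) (by ring)
            (combo_pt (l1 := 1 - α) (l2 := α - β + 1) (l3 := β - 1) (by ring) (by ring)).symm
        · refine mem (dn 1 2) (by simp [Gtris]) ?_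
          rw [dn_region, hz']
          exact mem_hull3 (by linarith) (by linarith) (by linarith) (by ring)
            (combo_pt (l1 := β - α) (l2 := α - 1) (l3 := 2 - β) (by ring) (by ring)).symm
      · rcases le_total α (β+1) with hc2 | hc2
        · rcases le_total α 2 with hs | hs
          · refine mem (up 1 1) (by simp [Gtris]) ?_
            rw [up_region, hz']
            exact mem_hull3 (by linarith) (by linarith) (by linarith) (by ring)
              (combo_pt (l1 := 2 - α) (l2 := α - β) (l3 := β - 1) (by ring) (by ring)).symm
          · refine mem (dn 2 2) (by simp [Gtris]) ?_
            rw [dn_region, hz']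
            exact mem_hull3 (by linarith) (by linarith) (by linarith) (by ring)
              (combo_pt (l1 := β - α + 1) (l2 := α - 2) (l3 := 2 - β) (by ring) (by ring)).symm
        · refine mem (up 2 1) (by simp [Gtris]) ?_
          rw [up_region, hz']
          exact mem_hull3 (by linarith) (by linarith) (by linarith) (by ring)
            (combo_pt (l1 := 3 - α) (l2 := α - β - 1) (l3 := β - 1) (by ring) (by ring)).symm

noncomputable def pc (p c r : ℝ) : Pt → ℝ := fun z => p * z.1 + c * Real.sqrt 3 / 3 * z.2 + r

lemma pc_pt (p c r i j : ℝ) : pc p c r (pt i j) = p * (i - j/2) + c * j / 2 + r := by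
  simp only [pc, pt]
  have h : c * Real.sqrt 3 / 3 * (j * Real.sqrt 3 / 2)
      = c * j * (Real.sqrt 3 * Real.sqrt 3) / 6 := by ring
  rw [h, s3]; ring

noncomputable def pcAff (p c r : ℝ) : Pt →ᵃ[ℝ] ℝ where
  toFun := pc p c r
  linear := p • LinearMap.fst ℝ ℝ ℝ + (c * Real.sqrt 3 / 3) • LinearMap.snd ℝ ℝ ℝ
  map_vadd' := by
    intro x v
    simp only [pc, LinearMap.add_apply, LinearMap.smul_apply, LinearMap.fst_apply,
      LinearMap.snd_apply, smul_eq_mul, vadd_eq_add, Prod.fst_add, Prod.snd_add]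
    ring

lemma pc_concave (p c r : ℝ) : ConcaveOn ℝ Set.univ (pc p c r) := by
  refine ⟨convex_univ, ?_⟩
  intro x _ y _ a b _ _ hab
  apply le_of_eq
  simp only [pc, smul_eq_mul, Prod.smul_fst, Prod.smul_snd, Prod.fst_add, Prod.snd_add]
  linear_combination (p * x.1 + c * Real.sqrt 3 / 3 * x.2 + p * y.1
    + c * Real.sqrt 3 / 3 * y.2 + r) * 0 + r * hab

lemma convex_pcle (p c r p' c' r' : ℝ) : Convex ℝ {z : Pt | pc p c r z ≤ pc p' c' r' z} := by
  have hl : IsLinearMap ℝ (fun z : Pt => (p - p') * z.1 + (c - c') * Real.sqrt 3 / 3 * z.2) := by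
    constructor
    · intro x y; simp only [Prod.fst_add, Prod.snd_add]; ring
    · intro m x; simp only [Prod.smul_fst, Prod.smul_snd, smul_eq_mul]; ring
  have := convex_halfSpace_le hl (r' - r)
  suffices key : {z : Pt | pc p c r z ≤ pc p' c' r' z} = {w : Pt | (p - p') * w.1 + (c - c') * Real.sqrt 3 / 3 * w.2 ≤ r' - r} by rw [key]; exact this
  ext z
  simp only [pc, Set.mem_setOf_eq]
  constructor <;> intro hh <;> linarith

lemma hull_le {p c r p' c' r' i1 j1 i2 j2 i3 j3 : ℝ}
    (h1 : pc p c r (pt i1 j1) ≤ pc p' c' r' (pt i1 j1))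
    (h2 : pc p c r (pt i2 j2) ≤ pc p' c' r' (pt i2 j2))
    (h3 : pc p c r (pt i3 j3) ≤ pc p' c' r' (pt i3 j3)) :
    convexHull ℝ ({pt i1 j1, pt i2 j2, pt i3 j3} : Set Pt)
      ⊆ {z : Pt | pc p c r z ≤ pc p' c' r' z} := by
  apply convexHull_min _ (convex_pcle p c r p' c' r')
  simp only [Set.insert_subset_iff, Set.singleton_subset_iff, Set.mem_setOf_eq]
  exact ⟨h1, h2, h3⟩

lemma min8_eq {a1 a2 a3 a4 a5 a6 a7 a8 m : ℝ} (h1 : m ≤ a1) (h2 : m ≤ a2) (h3 : m ≤ a3)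
    (h4 : m ≤ a4) (h5 : m ≤ a5) (h6 : m ≤ a6) (h7 : m ≤ a7) (h8 : m ≤ a8)
    (hk : a1 = m ∨ a2 = m ∨ a3 = m ∨ a4 = m ∨ a5 = m ∨ a6 = m ∨ a7 = m ∨ a8 = m) :
    min a1 (min a2 (min a3 (min a4 (min a5 (min a6 (min a7 a8)))))) = m := by
  apply le_antisymm
  · simp only [min_le_iff]
    rcases hk with rfl|rfl|rfl|rfl|rfl|rfl|rfl|rfl <;> simp
  · exact le_min h1 (le_min h2 (le_min h3 (le_min h4 (le_min h5 (le_min h6 (le_min h7 h8))))))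

noncomputable def gg : Pt → ℝ := fun z =>
  min (pc (-3/2) (-3/2) 3 z) <| min (pc (-3/2) (-1/2) (5/2) z) <| min (pc (-1) (-2) (5/2) z) <| min (pc (-1/2) (-3/2) (3/2) z) <|
  min (pc (-1/2) (1/2) (1/2) z) <| min (pc 0 1 0 z) <| min (pc (1/2) (-1/2) (1/2) z) (pc (1/2) (1/2) 0 z)

lemma gg_concave : ConcaveOn ℝ Set.univ gg := by
  have h78 := (pc_concave (1/2) (-1/2) (1/2)).inf (pc_concave (1/2) (1/2) 0)
  have h68 := (pc_concave 0 1 0).inf h78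
  have h58 := (pc_concave (-1/2) (1/2) (1/2)).inf h68
  have h48 := (pc_concave (-1/2) (-3/2) (3/2)).inf h58
  have h38 := (pc_concave (-1) (-2) (5/2)).inf h48
  have h28 := (pc_concave (-3/2) (-1/2) (5/2)).inf h38
  have h18 := (pc_concave (-3/2) (-3/2) 3).inf h28
  exact h18

lemma gg_v00 : gg (pt 0 0) = 0 := by
  simp only [gg, pc_pt]; norm_num

lemma gg_v01 : gg (pt 0 1) = 0 := by
  simp only [gg, pc_pt]; norm_num

lemma gg_v10 : gg (pt 1 0) = 0 := by
  simp only [gg, pc_pt]; norm_num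

lemma gg_v11 : gg (pt 1 1) = (1/2) := by
  simp only [gg, pc_pt]; norm_num

lemma gg_v12 : gg (pt 1 2) = 0 := by
  simp only [gg, pc_pt]; norm_num

lemma gg_v20 : gg (pt 2 0) = (-1/2) := by
  simp only [gg, pc_pt]; norm_num

lemma gg_v21 : gg (pt 2 1) = 0 := by
  simp only [gg, pc_pt]; norm_num

lemma gg_v22 : gg (pt 2 2) = (-1/2) := by
  simp only [gg, pc_pt]; norm_num

lemma gg_v31 : gg (pt 3 1) = (-3/2) := by
  simp only [gg, pc_pt]; norm_num

lemma gg_v32 : gg (pt 3 2) = (-3/2) := by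
  simp only [gg, pc_pt]; norm_num

lemma ggOn_up00 : ∀ x ∈ (up 0 0).region, gg x = (pc 0 1 0) x := by
  intro x hx
  rw [up_region] at hx
  exact min8_eq (hull_le (by rw [pc_pt, pc_pt]; norm_num) (by rw [pc_pt, pc_pt]; norm_num) (by rw [pc_pt, pc_pt]; norm_num) hx)
    (hull_le (by rw [pc_pt, pc_pt]; norm_num) (by rw [pc_pt, pc_pt]; norm_num) (by rw [pc_pt, pc_pt]; norm_num) hx)
    (hull_le (by rw [pc_pt, pc_pt]; norm_num) (by rw [pc_pt, pc_pt]; norm_num) (by rw [pc_pt, pc_pt]; norm_num) hx)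
    (hull_le (by rw [pc_pt, pc_pt]; norm_num) (by rw [pc_pt, pc_pt]; norm_num) (by rw [pc_pt, pc_pt]; norm_num) hx)
    (hull_le (by rw [pc_pt, pc_pt]; norm_num) (by rw [pc_pt, pc_pt]; norm_num) (by rw [pc_pt, pc_pt]; norm_num) hx)
    (le_refl _)
    (hull_le (by rw [pc_pt, pc_pt]; norm_num) (by rw [pc_pt, pc_pt]; norm_num) (by rw [pc_pt, pc_pt]; norm_num) hx)
    (hull_le (by rw [pc_pt, pc_pt]; norm_num) (by rw [pc_pt, pc_pt]; norm_num) (by rw [pc_pt, pc_pt]; norm_num) hx)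
    (Or.inr (Or.inr (Or.inr (Or.inr (Or.inr (Or.inl rfl))))))

lemma ggOn_up01 : ∀ x ∈ (up 0 1).region, gg x = (pc (1/2) (-1/2) (1/2)) x := by
  intro x hx
  rw [up_region] at hx
  exact min8_eq (hull_le (by rw [pc_pt, pc_pt]; norm_num) (by rw [pc_pt, pc_pt]; norm_num) (by rw [pc_pt, pc_pt]; norm_num) hx)
    (hull_le (by rw [pc_pt, pc_pt]; norm_num) (by rw [pc_pt, pc_pt]; norm_num) (by rw [pc_pt, pc_pt]; norm_num) hx)
    (hull_le (by rw [pc_pt, pc_pt]; norm_num) (by rw [pc_pt, pc_pt]; norm_num) (by rw [pc_pt, pc_pt]; norm_num) hx)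
    (hull_le (by rw [pc_pt, pc_pt]; norm_num) (by rw [pc_pt, pc_pt]; norm_num) (by rw [pc_pt, pc_pt]; norm_num) hx)
    (hull_le (by rw [pc_pt, pc_pt]; norm_num) (by rw [pc_pt, pc_pt]; norm_num) (by rw [pc_pt, pc_pt]; norm_num) hx)
    (hull_le (by rw [pc_pt, pc_pt]; norm_num) (by rw [pc_pt, pc_pt]; norm_num) (by rw [pc_pt, pc_pt]; norm_num) hx)
    (le_refl _)
    (hull_le (by rw [pc_pt, pc_pt]; norm_num) (by rw [pc_pt, pc_pt]; norm_num) (by rw [pc_pt, pc_pt]; norm_num) hx)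
    (Or.inr (Or.inr (Or.inr (Or.inr (Or.inr (Or.inr (Or.inl rfl)))))))

lemma ggOn_dn01 : ∀ x ∈ (dn 0 1).region, gg x = (pc (1/2) (1/2) 0) x := by
  intro x hx
  rw [dn_region] at hx
  exact min8_eq (hull_le (by rw [pc_pt, pc_pt]; norm_num) (by rw [pc_pt, pc_pt]; norm_num) (by rw [pc_pt, pc_pt]; norm_num) hx)
    (hull_le (by rw [pc_pt, pc_pt]; norm_num) (by rw [pc_pt, pc_pt]; norm_num) (by rw [pc_pt, pc_pt]; norm_num) hx)
    (hull_le (by rw [pc_pt, pc_pt]; norm_num) (by rw [pc_pt, pc_pt]; norm_num) (by rw [pc_pt, pc_pt]; norm_num) hx)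
    (hull_le (by rw [pc_pt, pc_pt]; norm_num) (by rw [pc_pt, pc_pt]; norm_num) (by rw [pc_pt, pc_pt]; norm_num) hx)
    (hull_le (by rw [pc_pt, pc_pt]; norm_num) (by rw [pc_pt, pc_pt]; norm_num) (by rw [pc_pt, pc_pt]; norm_num) hx)
    (hull_le (by rw [pc_pt, pc_pt]; norm_num) (by rw [pc_pt, pc_pt]; norm_num) (by rw [pc_pt, pc_pt]; norm_num) hx)
    (hull_le (by rw [pc_pt, pc_pt]; norm_num) (by rw [pc_pt, pc_pt]; norm_num) (by rw [pc_pt, pc_pt]; norm_num) hx)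
    (le_refl _)
    (Or.inr (Or.inr (Or.inr (Or.inr (Or.inr (Or.inr (Or.inr (rfl))))))))

lemma ggOn_up10 : ∀ x ∈ (up 1 0).region, gg x = (pc (-1/2) (1/2) (1/2)) x := by
  intro x hx
  rw [up_region] at hx
  exact min8_eq (hull_le (by rw [pc_pt, pc_pt]; norm_num) (by rw [pc_pt, pc_pt]; norm_num) (by rw [pc_pt, pc_pt]; norm_num) hx)
    (hull_le (by rw [pc_pt, pc_pt]; norm_num) (by rw [pc_pt, pc_pt]; norm_num) (by rw [pc_pt, pc_pt]; norm_num) hx)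
    (hull_le (by rw [pc_pt, pc_pt]; norm_num) (by rw [pc_pt, pc_pt]; norm_num) (by rw [pc_pt, pc_pt]; norm_num) hx)
    (hull_le (by rw [pc_pt, pc_pt]; norm_num) (by rw [pc_pt, pc_pt]; norm_num) (by rw [pc_pt, pc_pt]; norm_num) hx)
    (le_refl _)
    (hull_le (by rw [pc_pt, pc_pt]; norm_num) (by rw [pc_pt, pc_pt]; norm_num) (by rw [pc_pt, pc_pt]; norm_num) hx)
    (hull_le (by rw [pc_pt, pc_pt]; norm_num) (by rw [pc_pt, pc_pt]; norm_num) (by rw [pc_pt, pc_pt]; norm_num) hx)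
    (hull_le (by rw [pc_pt, pc_pt]; norm_num) (by rw [pc_pt, pc_pt]; norm_num) (by rw [pc_pt, pc_pt]; norm_num) hx)
    (Or.inr (Or.inr (Or.inr (Or.inr (Or.inl rfl)))))

lemma ggOn_up11 : ∀ x ∈ (up 1 1).region, gg x = (pc (-1/2) (-3/2) (3/2)) x := by
  intro x hx
  rw [up_region] at hx
  exact min8_eq (hull_le (by rw [pc_pt, pc_pt]; norm_num) (by rw [pc_pt, pc_pt]; norm_num) (by rw [pc_pt, pc_pt]; norm_num) hx)
    (hull_le (by rw [pc_pt, pc_pt]; norm_num) (by rw [pc_pt, pc_pt]; norm_num) (by rw [pc_pt, pc_pt]; norm_num) hx)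
    (hull_le (by rw [pc_pt, pc_pt]; norm_num) (by rw [pc_pt, pc_pt]; norm_num) (by rw [pc_pt, pc_pt]; norm_num) hx)
    (le_refl _)
    (hull_le (by rw [pc_pt, pc_pt]; norm_num) (by rw [pc_pt, pc_pt]; norm_num) (by rw [pc_pt, pc_pt]; norm_num) hx)
    (hull_le (by rw [pc_pt, pc_pt]; norm_num) (by rw [pc_pt, pc_pt]; norm_num) (by rw [pc_pt, pc_pt]; norm_num) hx)
    (hull_le (by rw [pc_pt, pc_pt]; norm_num) (by rw [pc_pt, pc_pt]; norm_num) (by rw [pc_pt, pc_pt]; norm_num) hx)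
    (hull_le (by rw [pc_pt, pc_pt]; norm_num) (by rw [pc_pt, pc_pt]; norm_num) (by rw [pc_pt, pc_pt]; norm_num) hx)
    (Or.inr (Or.inr (Or.inr (Or.inl rfl))))

lemma ggOn_dn11 : ∀ x ∈ (dn 1 1).region, gg x = (pc (-1/2) (1/2) (1/2)) x := by
  intro x hx
  rw [dn_region] at hx
  exact min8_eq (hull_le (by rw [pc_pt, pc_pt]; norm_num) (by rw [pc_pt, pc_pt]; norm_num) (by rw [pc_pt, pc_pt]; norm_num) hx)
    (hull_le (by rw [pc_pt, pc_pt]; norm_num) (by rw [pc_pt, pc_pt]; norm_num) (by rw [pc_pt, pc_pt]; norm_num) hx)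
    (hull_le (by rw [pc_pt, pc_pt]; norm_num) (by rw [pc_pt, pc_pt]; norm_num) (by rw [pc_pt, pc_pt]; norm_num) hx)
    (hull_le (by rw [pc_pt, pc_pt]; norm_num) (by rw [pc_pt, pc_pt]; norm_num) (by rw [pc_pt, pc_pt]; norm_num) hx)
    (le_refl _)
    (hull_le (by rw [pc_pt, pc_pt]; norm_num) (by rw [pc_pt, pc_pt]; norm_num) (by rw [pc_pt, pc_pt]; norm_num) hx)
    (hull_le (by rw [pc_pt, pc_pt]; norm_num) (by rw [pc_pt, pc_pt]; norm_num) (by rw [pc_pt, pc_pt]; norm_num) hx)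
    (hull_le (by rw [pc_pt, pc_pt]; norm_num) (by rw [pc_pt, pc_pt]; norm_num) (by rw [pc_pt, pc_pt]; norm_num) hx)
    (Or.inr (Or.inr (Or.inr (Or.inr (Or.inl rfl)))))

lemma ggOn_dn12 : ∀ x ∈ (dn 1 2).region, gg x = (pc (-1/2) (-3/2) (3/2)) x := by
  intro x hx
  rw [dn_region] at hx
  exact min8_eq (hull_le (by rw [pc_pt, pc_pt]; norm_num) (by rw [pc_pt, pc_pt]; norm_num) (by rw [pc_pt, pc_pt]; norm_num) hx)
    (hull_le (by rw [pc_pt, pc_pt]; norm_num) (by rw [pc_pt, pc_pt]; norm_num) (by rw [pc_pt, pc_pt]; norm_num) hx)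
    (hull_le (by rw [pc_pt, pc_pt]; norm_num) (by rw [pc_pt, pc_pt]; norm_num) (by rw [pc_pt, pc_pt]; norm_num) hx)
    (le_refl _)
    (hull_le (by rw [pc_pt, pc_pt]; norm_num) (by rw [pc_pt, pc_pt]; norm_num) (by rw [pc_pt, pc_pt]; norm_num) hx)
    (hull_le (by rw [pc_pt, pc_pt]; norm_num) (by rw [pc_pt, pc_pt]; norm_num) (by rw [pc_pt, pc_pt]; norm_num) hx)
    (hull_le (by rw [pc_pt, pc_pt]; norm_num) (by rw [pc_pt, pc_pt]; norm_num) (by rw [pc_pt, pc_pt]; norm_num) hx)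
    (hull_le (by rw [pc_pt, pc_pt]; norm_num) (by rw [pc_pt, pc_pt]; norm_num) (by rw [pc_pt, pc_pt]; norm_num) hx)
    (Or.inr (Or.inr (Or.inr (Or.inl rfl))))

lemma ggOn_up21 : ∀ x ∈ (up 2 1).region, gg x = (pc (-3/2) (-3/2) 3) x := by
  intro x hx
  rw [up_region] at hx
  exact min8_eq (le_refl _)
    (hull_le (by rw [pc_pt, pc_pt]; norm_num) (by rw [pc_pt, pc_pt]; norm_num) (by rw [pc_pt, pc_pt]; norm_num) hx)
    (hull_le (by rw [pc_pt, pc_pt]; norm_num) (by rw [pc_pt, pc_pt]; norm_num) (by rw [pc_pt, pc_pt]; norm_num) hx)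
    (hull_le (by rw [pc_pt, pc_pt]; norm_num) (by rw [pc_pt, pc_pt]; norm_num) (by rw [pc_pt, pc_pt]; norm_num) hx)
    (hull_le (by rw [pc_pt, pc_pt]; norm_num) (by rw [pc_pt, pc_pt]; norm_num) (by rw [pc_pt, pc_pt]; norm_num) hx)
    (hull_le (by rw [pc_pt, pc_pt]; norm_num) (by rw [pc_pt, pc_pt]; norm_num) (by rw [pc_pt, pc_pt]; norm_num) hx)
    (hull_le (by rw [pc_pt, pc_pt]; norm_num) (by rw [pc_pt, pc_pt]; norm_num) (by rw [pc_pt, pc_pt]; norm_num) hx)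
    (hull_le (by rw [pc_pt, pc_pt]; norm_num) (by rw [pc_pt, pc_pt]; norm_num) (by rw [pc_pt, pc_pt]; norm_num) hx)
    (Or.inl rfl)

lemma ggOn_dn21 : ∀ x ∈ (dn 2 1).region, gg x = (pc (-3/2) (-1/2) (5/2)) x := by
  intro x hx
  rw [dn_region] at hx
  exact min8_eq (hull_le (by rw [pc_pt, pc_pt]; norm_num) (by rw [pc_pt, pc_pt]; norm_num) (by rw [pc_pt, pc_pt]; norm_num) hx)
    (le_refl _)
    (hull_le (by rw [pc_pt, pc_pt]; norm_num) (by rw [pc_pt, pc_pt]; norm_num) (by rw [pc_pt, pc_pt]; norm_num) hx)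
    (hull_le (by rw [pc_pt, pc_pt]; norm_num) (by rw [pc_pt, pc_pt]; norm_num) (by rw [pc_pt, pc_pt]; norm_num) hx)
    (hull_le (by rw [pc_pt, pc_pt]; norm_num) (by rw [pc_pt, pc_pt]; norm_num) (by rw [pc_pt, pc_pt]; norm_num) hx)
    (hull_le (by rw [pc_pt, pc_pt]; norm_num) (by rw [pc_pt, pc_pt]; norm_num) (by rw [pc_pt, pc_pt]; norm_num) hx)
    (hull_le (by rw [pc_pt, pc_pt]; norm_num) (by rw [pc_pt, pc_pt]; norm_num) (by rw [pc_pt, pc_pt]; norm_num) hx)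
    (hull_le (by rw [pc_pt, pc_pt]; norm_num) (by rw [pc_pt, pc_pt]; norm_num) (by rw [pc_pt, pc_pt]; norm_num) hx)
    (Or.inr (Or.inl rfl))

lemma ggOn_dn22 : ∀ x ∈ (dn 2 2).region, gg x = (pc (-1) (-2) (5/2)) x := by
  intro x hx
  rw [dn_region] at hx
  exact min8_eq (hull_le (by rw [pc_pt, pc_pt]; norm_num) (by rw [pc_pt, pc_pt]; norm_num) (by rw [pc_pt, pc_pt]; norm_num) hx)
    (hull_le (by rw [pc_pt, pc_pt]; norm_num) (by rw [pc_pt, pc_pt]; norm_num) (by rw [pc_pt, pc_pt]; norm_num) hx)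
    (le_refl _)
    (hull_le (by rw [pc_pt, pc_pt]; norm_num) (by rw [pc_pt, pc_pt]; norm_num) (by rw [pc_pt, pc_pt]; norm_num) hx)
    (hull_le (by rw [pc_pt, pc_pt]; norm_num) (by rw [pc_pt, pc_pt]; norm_num) (by rw [pc_pt, pc_pt]; norm_num) hx)
    (hull_le (by rw [pc_pt, pc_pt]; norm_num) (by rw [pc_pt, pc_pt]; norm_num) (by rw [pc_pt, pc_pt]; norm_num) hx)
    (hull_le (by rw [pc_pt, pc_pt]; norm_num) (by rw [pc_pt, pc_pt]; norm_num) (by rw [pc_pt, pc_pt]; norm_num) hx)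
    (hull_le (by rw [pc_pt, pc_pt]; norm_num) (by rw [pc_pt, pc_pt]; norm_num) (by rw [pc_pt, pc_pt]; norm_num) hx)
    (Or.inr (Or.inr (Or.inl rfl)))

lemma smul_xi (m n : ℝ) : m • xiv 0 + n • xiv 1 = pt m n := by
  rw [xiv0, xiv1]
  simp only [pt, Prod.smul_mk, smul_eq_mul, Prod.mk_add_mk, Prod.mk.injEq]
  constructor <;> ring

lemma base_lat : ∀ T ∈ Gtris, ∃ a b : ℤ, T.base = pt (a : ℝ) (b : ℝ) := by
  intro T hT
  simp only [Gtris, Finset.mem_insert, Finset.mem_singleton] at hT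
  rcases hT with rfl|rfl|rfl|rfl|rfl|rfl|rfl|rfl|rfl|rfl
  exacts [⟨0, 0, by norm_num [up, dn]⟩, ⟨0, 1, by norm_num [up, dn]⟩, ⟨0, 1, by norm_num [up, dn]⟩,
    ⟨1, 0, by norm_num [up, dn]⟩, ⟨1, 1, by norm_num [up, dn]⟩, ⟨1, 1, by norm_num [up, dn]⟩, ⟨1, 2, by norm_num [up, dn]⟩,
    ⟨2, 1, by norm_num [up, dn]⟩, ⟨2, 1, by norm_num [up, dn]⟩, ⟨2, 2, by norm_num [up, dn]⟩]

noncomputable def Gex : ConvexGrid where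
  tris := Gtris
  nonempty := ⟨up 0 0, by simp [Gtris]⟩
  aligned := by
    intro T hT T' hT'
    obtain ⟨a, b, hab⟩ := base_lat T hT
    obtain ⟨a', b', hab'⟩ := base_lat T' hT'
    refine ⟨a - a', b - b', ?_⟩
    rw [hab, hab', pt_sub, smul_xi]
    push_cast
    rfl
  convex := unionH ▸ H_convex

noncomputable def hED : Ed → ℝ := fun e => gg e.2 - gg e.1

lemma mem_Gedges {T : GridTriangle} (hT : T ∈ Gtris) {e : Ed} (he : e ∈ T.edgeFinset) :
    e ∈ Gex.edges := Finset.mem_biUnion.2 ⟨T, hT, he⟩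

lemma hcc_ex : IsConcaveCocirculation Gex hED := by
  refine ⟨?_, gg, ?_, ?_, ?_⟩
  · intro T hT
    simp only [hED, GridTriangle.e0, GridTriangle.e1, GridTriangle.e2]
    ring
  · exact gg_concave.subset (Set.subset_univ _) Gex.convex
  · intro T hT
    have hT' : T ∈ Gtris := hT
    simp only [Gtris, Finset.mem_insert, Finset.mem_singleton] at hT'
    rcases hT' with rfl|rfl|rfl|rfl|rfl|rfl|rfl|rfl|rfl|rfl
    exacts [⟨pcAff 0 1 0, ggOn_up00⟩, ⟨pcAff (1/2) (-1/2) (1/2), ggOn_up01⟩,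
      ⟨pcAff (1/2) (1/2) 0, ggOn_dn01⟩, ⟨pcAff (-1/2) (1/2) (1/2), ggOn_up10⟩,
      ⟨pcAff (-1/2) (-3/2) (3/2), ggOn_up11⟩, ⟨pcAff (-1/2) (1/2) (1/2), ggOn_dn11⟩,
      ⟨pcAff (-1/2) (-3/2) (3/2), ggOn_dn12⟩, ⟨pcAff (-3/2) (-3/2) 3, ggOn_up21⟩,
      ⟨pcAff (-3/2) (-1/2) (5/2), ggOn_dn21⟩, ⟨pcAff (-1) (-2) (5/2), ggOn_dn22⟩]
  · intro e he; rfl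

lemma concave_ineq {Rg : Set Pt} {g' : Pt → ℝ} (hc : ConcaveOn ℝ Rg g')
    {T : GridTriangle} (haff : AffineOn g' T.region)
    {u v p q : Pt} (hu : u ∈ T.region) (hv : v ∈ T.region) (hp : p ∈ T.region)
    (hpR : p ∈ Rg) (hqR : q ∈ Rg) (hpq : p + q = u + v) :
    g' p + g' q ≤ g' u + g' v := by
  obtain ⟨φ, hφ⟩ := haff
  have hcvx : Convex ℝ T.region := convex_convexHull ℝ _
  have hm : (1/2 : ℝ) • u + (1/2 : ℝ) • v ∈ T.region :=
    hcvx hu hv (by norm_num) (by norm_num) (by norm_num)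
  have hmm : (1/2 : ℝ) • p + (1/2 : ℝ) • q = (1/2 : ℝ) • u + (1/2 : ℝ) • v := by
    rw [← smul_add, ← smul_add, hpq]
  have h1 : g' ((1/2 : ℝ) • u + (1/2 : ℝ) • v) = (1/2) * g' u + (1/2) * g' v := by
    rw [hφ _ hm, hφ _ hu, hφ _ hv, Convex.combo_affine_apply (by norm_num)]
    simp [smul_eq_mul]
  have h2 := hc.2 hpR hqR (by norm_num : (0:ℝ) ≤ 1/2) (by norm_num : (0:ℝ) ≤ 1/2)
    (by norm_num : (1/2 : ℝ) + 1/2 = 1)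
  rw [hmm, h1] at h2
  simp only [smul_eq_mul] at h2
  linarith


/-- counterexample from the concluding remarks.  There are a convex
grid G and a non-integral concave cocirculation h in G which is the unique concave
cocirculation agreeing with h on the set of edges where h is integral; in particular no
integer concave cocirculation agrees with h on all edges where h takes integer values. -/
theorem stmt15 :
    ∃ (G : ConvexGrid) (h : Ed → ℝ),
      IsConcaveCocirculation G h ∧
      (¬ ∀ e ∈ G.edges, ∃ z : ℤ, h e = (z : ℝ)) ∧
      (∀ h' : Ed → ℝ, IsConcaveCocirculation G h' →
        (∀ e ∈ G.edges, (∃ z : ℤ, h e = (z : ℝ)) → h' e = h e) →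
        ∀ e ∈ G.edges, h' e = h e) ∧
      ¬ ∃ h' : Ed → ℝ, IsConcaveCocirculation G h' ∧
          (∀ e ∈ G.edges, ∃ z : ℤ, h' e = (z : ℝ)) ∧
          ∀ e ∈ G.edges, (∃ z : ℤ, h e = (z : ℝ)) → h' e = h e := by
  have e01mem : (up 0 1).e0 ∈ Gex.edges :=
    mem_Gedges (T := up 0 1) (by simp [Gtris]) (by simp [GridTriangle.edgeFinset])
  have e01val : hED ((up 0 1).e0) = 1/2 := by
    simp only [hED, GridTriangle.e0, up_v0, up_v1]
    norm_num [gg_v01, gg_v11]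
  have nonint : ¬ ∀ e ∈ Gex.edges, ∃ z : ℤ, hED e = (z : ℝ) := by
    intro hall
    obtain ⟨z, hz⟩ := hall _ e01mem
    rw [e01val] at hz
    have h2 : (1 : ℝ) = 2 * (z : ℝ) := by linarith
    have h3 : (1 : ℤ) = 2 * z := by exact_mod_cast h2
    omega
  have uniq : ∀ h' : Ed → ℝ, IsConcaveCocirculation Gex h' →
      (∀ e ∈ Gex.edges, (∃ z : ℤ, hED e = (z : ℝ)) → h' e = hED e) →
      ∀ e ∈ Gex.edges, h' e = hED e := by
    intro h' hcc' hagree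
    obtain ⟨-, g', hcon', haff', hdiff'⟩ := hcc'
    have hag : ∀ T : GridTriangle, T ∈ Gtris → ∀ e : Ed, e ∈ T.edgeFinset →
        (∃ z : ℤ, hED e = (z : ℝ)) → g' e.2 - g' e.1 = hED e := by
      intro T hT e heT hz
      have heE : e ∈ Gex.edges := mem_Gedges hT heT
      rw [← hdiff' e heE]
      exact hagree e heE hz
    have E1 : g' (pt 0 1) - g' (pt 0 0) = 0 := by
      have hh := hag (dn 0 1) (by simp [Gtris]) ((dn 0 1).e2)
        (by simp [GridTriangle.edgeFinset])
        ⟨0, by simp only [hED, GridTriangle.e2, dn_v2, dn_v0]; norm_num [gg_v00, gg_v01]⟩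
      simp only [GridTriangle.e2, dn_v2, dn_v0, hED] at hh
      norm_num [gg_v00, gg_v01] at hh
      linarith
    have E2 : g' (pt 1 0) - g' (pt 0 0) = 0 := by
      have hh := hag (up 0 0) (by simp [Gtris]) ((up 0 0).e0)
        (by simp [GridTriangle.edgeFinset])
        ⟨0, by simp only [hED, GridTriangle.e0, up_v0, up_v1]; norm_num [gg_v00, gg_v10]⟩
      simp only [GridTriangle.e0, up_v0, up_v1, hED] at hh
      norm_num [gg_v00, gg_v10] at hh
      linarith
    have E3 : g' (pt 0 1) - g' (pt 1 2) = 0 := by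
      have hh := hag (up 0 1) (by simp [Gtris]) ((up 0 1).e2)
        (by simp [GridTriangle.edgeFinset])
        ⟨0, by simp only [hED, GridTriangle.e2, up_v2, up_v0]; norm_num [gg_v12, gg_v01]⟩
      simp only [GridTriangle.e2, up_v2, up_v0, hED] at hh
      norm_num [gg_v12, gg_v01] at hh
      linarith
    have E4 : g' (pt 1 0) - g' (pt 2 1) = 0 := by
      have hh := hag (up 1 0) (by simp [Gtris]) ((up 1 0).e2)
        (by simp [GridTriangle.edgeFinset])
        ⟨0, by simp only [hED, GridTriangle.e2, up_v2, up_v0]; norm_num [gg_v21, gg_v10]⟩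
      simp only [GridTriangle.e2, up_v2, up_v0, hED] at hh
      norm_num [gg_v21, gg_v10] at hh
      linarith
    have E5 : g' (pt 1 1) - g' (pt 2 2) = 1 := by
      have hh := hag (up 1 1) (by simp [Gtris]) ((up 1 1).e2)
        (by simp [GridTriangle.edgeFinset])
        ⟨1, by simp only [hED, GridTriangle.e2, up_v2, up_v0]; norm_num [gg_v22, gg_v11]⟩
      simp only [GridTriangle.e2, up_v2, up_v0, hED] at hh
      norm_num [gg_v22, gg_v11] at hh
      linarith
    have E6 : g' (pt 3 2) - g' (pt 2 2) = (-1) := by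
      have hh := hag (dn 2 2) (by simp [Gtris]) ((dn 2 2).e0)
        (by simp [GridTriangle.edgeFinset])
        ⟨(-1), by simp only [hED, GridTriangle.e0, dn_v0, dn_v1]; norm_num [gg_v22, gg_v32]⟩
      simp only [GridTriangle.e0, dn_v0, dn_v1, hED] at hh
      norm_num [gg_v22, gg_v32] at hh
      linarith
    have E7 : g' (pt 2 0) - g' (pt 3 1) = 1 := by
      have hh := hag (dn 2 1) (by simp [Gtris]) ((dn 2 1).e1)
        (by simp [GridTriangle.edgeFinset])
        ⟨1, by simp only [hED, GridTriangle.e1, dn_v1, dn_v2]; norm_num [gg_v31, gg_v20]⟩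
      simp only [GridTriangle.e1, dn_v1, dn_v2, hED] at hh
      norm_num [gg_v31, gg_v20] at hh
      linarith
    have E8 : g' (pt 3 2) - g' (pt 3 1) = 0 := by
      have hh := hag (up 2 1) (by simp [Gtris]) ((up 2 1).e1)
        (by simp [GridTriangle.edgeFinset])
        ⟨0, by simp only [hED, GridTriangle.e1, up_v1, up_v2]; norm_num [gg_v31, gg_v32]⟩
      simp only [GridTriangle.e1, up_v1, up_v2, hED] at hh
      norm_num [gg_v31, gg_v32] at hh
      linarith
    have IA : g' (pt 2 0) + g' (pt 1 1) ≤ g' (pt 1 0) + g' (pt 2 1) := by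
      have m1 : up 1 0 ∈ Gtris := by simp [Gtris]
      have m2 : dn 1 1 ∈ Gtris := by simp [Gtris]
      have hu : pt 1 0 ∈ (up 1 0).region := by
        rw [up_region]
        exact subset_convexHull ℝ _ (by norm_num [Set.mem_insert_iff, Set.mem_singleton_iff])
      have hv : pt 2 1 ∈ (up 1 0).region := by
        rw [up_region]
        exact subset_convexHull ℝ _ (by norm_num [Set.mem_insert_iff, Set.mem_singleton_iff])
      have hp : pt 2 0 ∈ (up 1 0).region := by
        rw [up_region]
        exact subset_convexHull ℝ _ (by norm_num [Set.mem_insert_iff, Set.mem_singleton_iff])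
      have hq : pt 1 1 ∈ (dn 1 1).region := by
        rw [dn_region]
        exact subset_convexHull ℝ _ (by norm_num [Set.mem_insert_iff, Set.mem_singleton_iff])
      exact concave_ineq hcon' (haff' _ m1) hu hv hp
        (Set.mem_iUnion₂.2 ⟨_, m1, hp⟩) (Set.mem_iUnion₂.2 ⟨_, m2, hq⟩)
        (by rw [pt_add, pt_add]; norm_num)
    have IB : g' (pt 2 1) + g' (pt 1 2) ≤ g' (pt 1 1) + g' (pt 2 2) := by
      have m1 : up 1 1 ∈ Gtris := by simp [Gtris]
      have m2 : dn 1 2 ∈ Gtris := by simp [Gtris]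
      have hu : pt 1 1 ∈ (up 1 1).region := by
        rw [up_region]
        exact subset_convexHull ℝ _ (by norm_num [Set.mem_insert_iff, Set.mem_singleton_iff])
      have hv : pt 2 2 ∈ (up 1 1).region := by
        rw [up_region]
        exact subset_convexHull ℝ _ (by norm_num [Set.mem_insert_iff, Set.mem_singleton_iff])
      have hp : pt 2 1 ∈ (up 1 1).region := by
        rw [up_region]
        exact subset_convexHull ℝ _ (by norm_num [Set.mem_insert_iff, Set.mem_singleton_iff])
      have hq : pt 1 2 ∈ (dn 1 2).region := by
        rw [dn_region]
        exact subset_convexHull ℝ _ (by norm_num [Set.mem_insert_iff, Set.mem_singleton_iff])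
      exact concave_ineq hcon' (haff' _ m1) hu hv hp
        (Set.mem_iUnion₂.2 ⟨_, m1, hp⟩) (Set.mem_iUnion₂.2 ⟨_, m2, hq⟩)
        (by rw [pt_add, pt_add]; norm_num)
    set c := g' (pt 0 0) with hc
    have X00 : g' (pt 0 0) = c := hc.symm
    have X01 : g' (pt 0 1) = c := by linarith
    have X10 : g' (pt 1 0) = c := by linarith
    have X12 : g' (pt 1 2) = c := by linarith
    have X21 : g' (pt 2 1) = c := by linarith
    have X11 : g' (pt 1 1) = c + 1/2 := by linarith
    have X22 : g' (pt 2 2) = c - 1/2 := by linarith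
    have X32 : g' (pt 3 2) = c - 3/2 := by linarith
    have X31 : g' (pt 3 1) = c - 3/2 := by linarith
    have X20 : g' (pt 2 0) = c - 1/2 := by linarith
    intro e he
    have hde := hdiff' e he
    obtain ⟨T, hT, heT⟩ := Finset.mem_biUnion.1 he
    have hT' : T ∈ Gtris := hT
    simp only [Gtris, Finset.mem_insert, Finset.mem_singleton] at hT'
    simp only [GridTriangle.edgeFinset, Finset.mem_insert, Finset.mem_singleton] at heT
    rcases hT' with rfl|rfl|rfl|rfl|rfl|rfl|rfl|rfl|rfl|rfl <;>
      rcases heT with rfl|rfl|rfl <;>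
      · rw [hde]
        simp only [hED, GridTriangle.e0, GridTriangle.e1, GridTriangle.e2,
          up_v0, up_v1, up_v2, dn_v0, dn_v1, dn_v2]
        norm_num [X00, X01, X10, X12, X21, X11, X22, X32, X31, X20, gg_v00, gg_v01, gg_v10, gg_v11, gg_v12, gg_v20, gg_v21, gg_v22, gg_v31, gg_v32]
  refine ⟨Gex, hED, hcc_ex, nonint, uniq, ?_⟩
  rintro ⟨h', hcc', hint', hagr'⟩
  have hall := uniq h' hcc' hagr'
  obtain ⟨z, hz⟩ := hint' _ e01mem
  rw [hall _ e01mem, e01val] at hz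
  have h2 : (1 : ℝ) = 2 * (z : ℝ) := by linarith
  have h3 : (1 : ℤ) = 2 * z := by exact_mod_cast h2
  omega

end
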